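/- Composition of twists: Let R ∈ End(V⊗V) be an invertible solution of the Yang–Baxter equation. Suppose (F, G) is a twisting pair for R (i.e. G F₁₂⁻¹ and G F₂₃⁻¹ satisfy the intertwining conditions R₁₂ (G F₁₂⁻¹) = (G F₁₂⁻¹)^{(213)} R₁₂ and R₂₃ (G F₂₃⁻¹) = (G F₂₃⁻¹)^{(132)} R₂₃), and let R̃ = τ(F)⁻¹ R F. Suppose further (F′, G′) is a twisting pair for R̃. Then (F F′, G G′) is a twisting pair for R, and the resulting twisted R-matrix is τ(F F′)⁻¹ R (F F′) = τ(F′)⁻¹ R̃ F′. -/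
import Mathlib


open TensorProduct

noncomputable section
variable (k V : Type*) [Field k] [AddCommGroup V] [Module k V]

/-- The flip `P : V ⊗ V → V ⊗ V`. -/
def flipE : Module.End k (V ⊗[k] V) := (TensorProduct.comm k V V).toLinearMap

/-- `τ(X) = P X P`. -/
def tauE (X : Module.End k (V ⊗[k] V)) : Module.End k (V ⊗[k] V) :=
  flipE k V * X * flipE k V

/-- The embedding `X ↦ X₂₃` into `End(V ⊗ V ⊗ V)`. -/
def leg23 (X : Module.End k (V ⊗[k] V)) : Module.End k (V ⊗[k] (V ⊗[k] V)) :=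
  LinearMap.lTensor V X

/-- The embedding `X ↦ X₁₂` into `End(V ⊗ V ⊗ V)`. -/
def leg12 (X : Module.End k (V ⊗[k] V)) : Module.End k (V ⊗[k] (V ⊗[k] V)) :=
  (TensorProduct.assoc k V V V).toLinearMap ∘ₗ LinearMap.rTensor V X ∘ₗ
    (TensorProduct.assoc k V V V).symm.toLinearMap

/-- The flip of factors 1 and 2. -/
def P12 : Module.End k (V ⊗[k] (V ⊗[k] V)) := leg12 k V (flipE k V)

/-- The flip of factors 2 and 3. -/
def P23 : Module.End k (V ⊗[k] (V ⊗[k] V)) := leg23 k V (flipE k V)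

/-- The embedding `X ↦ X₁₃`. -/
def leg13 (X : Module.End k (V ⊗[k] V)) : Module.End k (V ⊗[k] (V ⊗[k] V)) :=
  P23 k V * leg12 k V X * P23 k V

/-- The Yang–Baxter equation `R₁₂R₁₃R₂₃ = R₂₃R₁₃R₁₂`. -/
def YB (R : Module.End k (V ⊗[k] V)) : Prop :=
  leg12 k V R * leg13 k V R * leg23 k V R = leg23 k V R * leg13 k V R * leg12 k V R

/-- `(F, G)` (with given two-sided inverses `F'`, `G'`) is a *twisting pair* for `R`:
`Φ := G F₁₂⁻¹` and `Ψ := G F₂₃⁻¹` satisfy `R₁₂ Φ = Φ^{(213)} R₁₂` and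
`R₂₃ Ψ = Ψ^{(132)} R₂₃`. -/
def TwistingPair (R F F' : Module.End k (V ⊗[k] V))
    (G G' : Module.End k (V ⊗[k] (V ⊗[k] V))) : Prop :=
  F * F' = 1 ∧ F' * F = 1 ∧ G * G' = 1 ∧ G' * G = 1 ∧
  leg12 k V R * (G * leg12 k V F') =
    (P12 k V * (G * leg12 k V F') * P12 k V) * leg12 k V R ∧
  leg23 k V R * (G * leg23 k V F') =
    (P23 k V * (G * leg23 k V F') * P23 k V) * leg23 k V R


lemma key_monoid {M : Type*} [Monoid M] (p a f f' g g₂ f₂' b : M)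
    (hp : p * p = 1) (hf : f * f' = 1) (hf' : f' * f = 1)
    (hb : b = p * f' * p * a * f)
    (h1 : a * (g * f') = p * (g * f') * p * a)
    (h2 : b * (g₂ * f₂') = p * (g₂ * f₂') * p * b) :
    a * (g * g₂ * (f₂' * f')) = p * (g * g₂ * (f₂' * f')) * p * a := by
  have hp1 : ∀ x : M, p * (p * x) = x := fun x => by rw [← mul_assoc, hp, one_mul]
  have hff' : ∀ x : M, f * (f' * x) = x := fun x => by rw [← mul_assoc, hf, one_mul]
  have hf'f : ∀ x : M, f' * (f * x) = x := fun x => by rw [← mul_assoc, hf', one_mul]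
  have e1 : a * g = p * (g * (f' * (p * (a * f)))) := by
    have h := congrArg (· * f) h1
    simp only [mul_assoc, hf', mul_one] at h
    simpa [mul_assoc] using h
  have e3 : f' * (p * (a * (f * (g₂ * (f₂' * f'))))) = g₂ * (f₂' * (f' * (p * a))) := by
    have h := congrArg (fun y => p * (y * f')) h2
    rw [hb] at h
    simp only [mul_assoc, hp1, hf, mul_one, hff'] at h
    simpa [mul_assoc, hp1, hf, mul_one, hff'] using h
  calc a * (g * g₂ * (f₂' * f')) = (a * g) * (g₂ * (f₂' * f')) := by
        simp [mul_assoc]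
    _ = p * (g * (f' * (p * (a * (f * (g₂ * (f₂' * f'))))))) := by
        rw [e1]; simp [mul_assoc]
    _ = p * (g * (g₂ * (f₂' * (f' * (p * a))))) := by rw [e3]
    _ = p * (g * g₂ * (f₂' * f')) * p * a := by simp [mul_assoc]

lemma leg23_mul (X Y : Module.End k (V ⊗[k] V)) :
    leg23 k V (X * Y) = leg23 k V X * leg23 k V Y := LinearMap.lTensor_mul _ _ _

lemma leg12_mul (X Y : Module.End k (V ⊗[k] V)) :
    leg12 k V (X * Y) = leg12 k V X * leg12 k V Y := by
  unfold leg12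
  rw [LinearMap.rTensor_mul]
  ext x
  simp [Module.End.mul_apply]

lemma leg12_one : leg12 k V 1 = 1 := by
  unfold leg12
  ext x
  simp

lemma leg23_one : leg23 k V 1 = 1 := by
  unfold leg23
  ext x
  simp

lemma flipE_sq : flipE k V * flipE k V = 1 := by
  ext x y
  simp [flipE, Module.End.mul_apply]

lemma tauE_mul (X Y : Module.End k (V ⊗[k] V)) :
    tauE k V (X * Y) = tauE k V X * tauE k V Y := by
  have hc : ∀ z : Module.End k (V ⊗[k] V), flipE k V * (flipE k V * z) = z := fun z => by
    rw [← mul_assoc, flipE_sq, one_mul]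
  simp [tauE, mul_assoc, hc]


/-- composition of twists: if `(F, G)` is a twisting pair for `R`
with twisted matrix `R̃ = τ(F)⁻¹ R F`, and `(F₂, G₂)` is a twisting pair for `R̃`,
then `(F F₂, G G₂)` is a twisting pair for `R`, and the twisted R-matrix it produces
is `τ(F F₂)⁻¹ R (F F₂) = τ(F₂)⁻¹ R̃ F₂`. -/
theorem twistingPair_comp [FiniteDimensional k V]
    (R R' F F' F₂ F₂' : Module.End k (V ⊗[k] V))
    (G G' G₂ G₂' : Module.End k (V ⊗[k] (V ⊗[k] V)))
    (hR : R * R' = 1) (hR' : R' * R = 1)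
    (hYB : YB k V R)
    (hTP : TwistingPair k V R F F' G G')
    (hTP₂ : TwistingPair k V (tauE k V F' * R * F) F₂ F₂' G₂ G₂') :
    TwistingPair k V R (F * F₂) (F₂' * F') (G * G₂) (G₂' * G') ∧
    tauE k V (F₂' * F') * R * (F * F₂) =
      tauE k V F₂' * (tauE k V F' * R * F) * F₂ := by
  
  obtain ⟨hF, hF', hG, hG', h12, h23⟩ := hTP
  obtain ⟨hF₂, hF₂', hG₂, hG₂', h12₂, h23₂⟩ := hTP₂
  have hp12 : P12 k V * P12 k V = 1 := by
    rw [P12, ← leg12_mul, flipE_sq, leg12_one]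
  have hp23 : P23 k V * P23 k V = 1 := by
    rw [P23, ← leg23_mul, flipE_sq, leg23_one]
  have hb12 : leg12 k V (tauE k V F' * R * F) =
      P12 k V * leg12 k V F' * P12 k V * leg12 k V R * leg12 k V F := by
    simp [tauE, leg12_mul, P12, mul_assoc]
  have hb23 : leg23 k V (tauE k V F' * R * F) =
      P23 k V * leg23 k V F' * P23 k V * leg23 k V R * leg23 k V F := by
    simp [tauE, leg23_mul, P23, mul_assoc]
  refine ⟨⟨?_, ?_, ?_, ?_, ?_, ?_⟩, ?_⟩
  · calc F * F₂ * (F₂' * F') = F * (F₂ * F₂') * F' := by simp [mul_assoc]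
      _ = 1 := by rw [hF₂, mul_one, hF]
  · calc F₂' * F' * (F * F₂) = F₂' * (F' * F) * F₂ := by simp [mul_assoc]
      _ = 1 := by rw [hF', mul_one, hF₂']
  · calc G * G₂ * (G₂' * G') = G * (G₂ * G₂') * G' := by simp [mul_assoc]
      _ = 1 := by rw [hG₂, mul_one, hG]
  · calc G₂' * G' * (G * G₂) = G₂' * (G' * G) * G₂ := by simp [mul_assoc]
      _ = 1 := by rw [hG', mul_one, hG₂']
  · rw [leg12_mul]
    exact key_monoid (P12 k V) (leg12 k V R) (leg12 k V F) (leg12 k V F') G G₂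
      (leg12 k V F₂') (leg12 k V (tauE k V F' * R * F)) hp12
      (by rw [← leg12_mul, hF, leg12_one]) (by rw [← leg12_mul, hF', leg12_one])
      hb12 h12 h12₂
  · rw [leg23_mul]
    exact key_monoid (P23 k V) (leg23 k V R) (leg23 k V F) (leg23 k V F') G G₂
      (leg23 k V F₂') (leg23 k V (tauE k V F' * R * F)) hp23
      (by rw [← leg23_mul, hF, leg23_one]) (by rw [← leg23_mul, hF', leg23_one])
      hb23 h23 h23₂
  · rw [tauE_mul]
    simp [mul_assoc]
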